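/- (Lemma 4.) Let (X_i)_{i≥1} be i.i.d. real random variables taking values in [−B, B] for some B > 0, independent of the sequence (Y_i)_{i≥1}, and suppose (Y_i) satisfies: (Convergence) lim_{n→∞} E[Ȳ_n] = μ_Y where Ȳ_n = (1/n)∑_{i=1}^n Y_i; (Concentration) there are constants β > 1, ξ > 0, 1/2 ≤ η < 1 such that for all integers n ≥ 1 and reals z ≥ 1, P(n Ȳ_n − n μ_Y ≥ n^η z) ≤ β/z^ξ and P(n Ȳ_n − n μ_Y ≤ −n^η z) ≤ β/z^ξ. Let ρ > 0 and Z_i = X_i + ρ Y_i, with Z̄_n = (1/n)∑_{i=1}^n Z_i and μ_X = E[X_1]. Then: (A) lim_{n→∞} E[Z̄_n] = μ_X + ρ μ_Y; and (B) there exists a constant β' > 1, depending only on ρ, ξ, β and B, such that for all integers n ≥ 1 and reals z ≥ 1, P(n Z̄_n − n(μ_X + ρ μ_Y) ≥ n^η z) ≤ β'/z^ξ and P(n Z̄_n − n(μ_X + ρ μ_Y) ≤ −n^η z) ≤ β'/z^ξ. -/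

import Mathlib

open MeasureTheory ProbabilityTheory Finset

section AuxLemmas
open Real
variable {Ω : Type*} [MeasurableSpace Ω] (P : Measure Ω) [IsProbabilityMeasure P]

lemma aux_mgf_le (W : Ω → ℝ) (hW : Measurable W) (M t : ℝ) (hM : 0 < M)
    (hbdd : ∀ ω, |W ω| ≤ M) (hmean : ∫ ω, W ω ∂P = 0)
    (ht0 : 0 ≤ t) (ht1 : t * M ≤ 1) :
    mgf W P t ≤ exp (t ^ 2 * M ^ 2) := by
  have hWint : Integrable W P := by
    refine (integrable_const M).mono' hW.aestronglyMeasurable (ae_of_all _ fun ω => ?_)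
    simpa using hbdd ω
  have habs : ∀ ω, |t * W ω| ≤ 1 := by
    intro ω
    rw [abs_mul, abs_of_nonneg ht0]
    exact (mul_le_mul_of_nonneg_left (hbdd ω) ht0).trans ht1
  have hpt : ∀ ω, exp (t * W ω) ≤ 1 + t * W ω + t ^ 2 * M ^ 2 := by
    intro ω
    have h1 := Real.abs_exp_sub_one_sub_id_le (habs ω)
    have h2 : (t * W ω) ^ 2 ≤ t ^ 2 * M ^ 2 := by
      rw [mul_pow]
      refine mul_le_mul_of_nonneg_left ?_ (sq_nonneg t)
      rw [← sq_abs (W ω)]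
      exact pow_le_pow_left₀ (abs_nonneg _) (hbdd ω) 2
    have := abs_le.1 h1
    nlinarith
  have hintexp : Integrable (fun ω => exp (t * W ω)) P := by
    refine (integrable_const (exp 1)).mono'
      ((hW.const_mul t).exp).aestronglyMeasurable (ae_of_all _ fun ω => ?_)
    rw [Real.norm_eq_abs, abs_of_pos (exp_pos _)]
    exact exp_le_exp.2 ((le_abs_self _).trans (habs ω))
  have hint2 : Integrable (fun ω => 1 + t * W ω + t ^ 2 * M ^ 2) P :=
    ((integrable_const 1).add (hWint.const_mul t)).add (integrable_const _)
  calc mgf W P t = ∫ ω, exp (t * W ω) ∂P := rfl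
    _ ≤ ∫ ω, (1 + t * W ω + t ^ 2 * M ^ 2) ∂P := integral_mono hintexp hint2 hpt
    _ = 1 + t ^ 2 * M ^ 2 := by
        have i0 : Integrable (fun ω : Ω => t * W ω) P := hWint.const_mul t
        have i1 : Integrable (fun ω : Ω => 1 + t * W ω) P := (integrable_const 1).add i0
        rw [integral_add i1 (integrable_const _), integral_add (integrable_const 1) i0,
          integral_const, integral_const_mul, hmean, integral_const]
        simp
    _ ≤ exp (t ^ 2 * M ^ 2) := by
        have := Real.add_one_le_exp (t ^ 2 * M ^ 2); linarith

lemma aux_chernoff (W : ℕ → Ω → ℝ) (hW : ∀ i, Measurable (W i))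
    (hind : iIndepFun W P) (M : ℝ) (hM : 0 < M)
    (hbdd : ∀ i ω, |W i ω| ≤ M) (hmean : ∀ i, ∫ ω, W i ω ∂P = 0)
    (n : ℕ) (t a : ℝ) (ht0 : 0 ≤ t) (ht1 : t * M ≤ 1) :
    P {ω | a ≤ ∑ i ∈ range n, W i ω}
      ≤ ENNReal.ofReal (exp (-t * a + n * (t ^ 2 * M ^ 2))) := by
  have hintexp : ∀ i ∈ range n, Integrable (fun ω => exp (t * W i ω)) P := by
    intro i _
    refine (integrable_const (exp 1)).mono'
      ((hW i).const_mul t).exp.aestronglyMeasurable (ae_of_all _ fun ω => ?_)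
    rw [Real.norm_eq_abs, abs_of_pos (exp_pos _)]
    refine exp_le_exp.2 ((le_abs_self _).trans ?_)
    rw [abs_mul, abs_of_nonneg ht0]
    exact (mul_le_mul_of_nonneg_left (hbdd i ω) ht0).trans ht1
  have hsum_int : Integrable (fun ω => exp (t * (∑ i ∈ range n, W i) ω)) P :=
    hind.integrable_exp_mul_sum hW hintexp
  have key := measure_ge_le_exp_mul_mgf (X := ∑ i ∈ range n, W i) (μ := P) a ht0 hsum_int
  have hmgf : mgf (∑ i ∈ range n, W i) P t ≤ exp ((n : ℝ) * (t ^ 2 * M ^ 2)) := by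
    rw [hind.mgf_sum hW]
    calc ∏ i ∈ range n, mgf (W i) P t ≤ ∏ _i ∈ range n, exp (t ^ 2 * M ^ 2) :=
          Finset.prod_le_prod (fun i _ => mgf_nonneg)
            (fun i _ => aux_mgf_le P (W i) (hW i) M t hM (hbdd i) (hmean i) ht0 ht1)
      _ = exp ((n : ℝ) * (t ^ 2 * M ^ 2)) := by
          rw [prod_const, card_range, ← Real.exp_nat_mul]
  have hset : {ω | a ≤ ∑ i ∈ range n, W i ω} = {ω | a ≤ (∑ i ∈ range n, W i) ω} := by
    simp [Finset.sum_apply]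
  rw [hset]
  rw [ENNReal.le_ofReal_iff_toReal_le (measure_ne_top P _) (exp_pos _).le]
  calc (P {ω | a ≤ (∑ i ∈ range n, W i) ω}).toReal
      ≤ exp (-t * a) * mgf (∑ i ∈ range n, W i) P t := key
    _ ≤ exp (-t * a) * exp ((n : ℝ) * (t ^ 2 * M ^ 2)) := by
        exact mul_le_mul_of_nonneg_left hmgf (exp_pos _).le
    _ = exp (-t * a + n * (t ^ 2 * M ^ 2)) := (Real.exp_add _ _).symm

lemma aux_tail (W : ℕ → Ω → ℝ) (hW : ∀ i, Measurable (W i))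
    (hind : iIndepFun W P) (M : ℝ) (hM : 0 < M)
    (hbdd : ∀ i ω, |W i ω| ≤ M) (hmean : ∀ i, ∫ ω, W i ω ∂P = 0)
    (η : ℝ) (hη : 1 / 2 ≤ η) (n : ℕ) (hn : 1 ≤ n) (z : ℝ) (hz : 1 ≤ z) :
    P {ω | (n : ℝ) ^ η * z / 2 ≤ ∑ i ∈ range n, W i ω}
      ≤ ENNReal.ofReal (exp (-(min (1 / (16 * M ^ 2)) (1 / (4 * M)) * z))) := by
  set c : ℝ := min (1 / (16 * M ^ 2)) (1 / (4 * M)) with hc_def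
  have hc1 : c ≤ 1 / (16 * M ^ 2) := min_le_left _ _
  have hc2 : c ≤ 1 / (4 * M) := min_le_right _ _
  have hcpos : 0 < c := lt_min (by positivity) (by positivity)
  set a : ℝ := (n : ℝ) ^ η * z / 2 with ha_def
  have hn1 : (1 : ℝ) ≤ (n : ℝ) := by exact_mod_cast hn
  have hnpos : (0 : ℝ) < (n : ℝ) := by linarith
  have hnη : (1 : ℝ) ≤ (n : ℝ) ^ η :=
    Real.one_le_rpow hn1 (by linarith)
  have ha1 : z / 2 ≤ a := by
    rw [ha_def]
    have : 1 * z ≤ (n : ℝ) ^ η * z := by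
      exact mul_le_mul_of_nonneg_right hnη (by linarith)
    linarith
  have hapos : 0 < a := by linarith
  have hasq : (n : ℝ) * z ^ 2 ≤ 4 * a ^ 2 := by
    have h2η : (n : ℝ) ^ (1 : ℝ) ≤ (n : ℝ) ^ (2 * η) :=
      Real.rpow_le_rpow_of_exponent_le hn1 (by linarith)
    have hsq : ((n : ℝ) ^ η) ^ 2 = (n : ℝ) ^ (2 * η) := by
      rw [← Real.rpow_natCast ((n : ℝ) ^ η) 2, ← Real.rpow_mul hnpos.le]
      norm_num [mul_comm]
    have hn2 : (n : ℝ) ≤ ((n : ℝ) ^ η) ^ 2 := by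
      rw [hsq]; simpa using h2η
    have : a ^ 2 = ((n : ℝ) ^ η) ^ 2 * z ^ 2 / 4 := by rw [ha_def]; ring
    rw [this]
    have hz2 : (0 : ℝ) ≤ z ^ 2 := sq_nonneg z
    have := mul_le_mul_of_nonneg_right hn2 hz2
    linarith
  by_cases hcase : a ≤ 2 * n * M
  · -- small deviation: t = a / (2 n M²)
    set t : ℝ := a / (2 * n * M ^ 2) with ht_def
    have ht0 : 0 ≤ t := by positivity
    have ht1 : t * M ≤ 1 := by
      rw [ht_def, div_mul_eq_mul_div, div_le_one (by positivity)]
      nlinarith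
    refine (aux_chernoff P W hW hind M hM hbdd hmean n t a ht0 ht1).trans
      (ENNReal.ofReal_le_ofReal (exp_le_exp.2 ?_))
    have hexp : -t * a + n * (t ^ 2 * M ^ 2) = -(a ^ 2 / (4 * n * M ^ 2)) := by
      rw [ht_def]; field_simp; ring
    rw [hexp, neg_le_neg_iff]
    -- c * z ≤ a² / (4 n M²)
    rw [le_div_iff₀ (by positivity)]
    have h16 : c * (16 * M ^ 2) ≤ 1 := by
      calc c * (16 * M ^ 2) ≤ 1 / (16 * M ^ 2) * (16 * M ^ 2) :=
            mul_le_mul_of_nonneg_right hc1 (by positivity)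
        _ = 1 := by field_simp
    have hzz : z ≤ z ^ 2 := by nlinarith
    have step : c * z * (4 * n * M ^ 2) ≤ z * n / 4 := by
      have := mul_le_mul_of_nonneg_right h16 (show (0:ℝ) ≤ z * n / 4 by positivity)
      calc c * z * (4 * n * M ^ 2) = c * (16 * M ^ 2) * (z * n / 4) := by ring
        _ ≤ 1 * (z * n / 4) := this
        _ = z * n / 4 := one_mul _
    calc c * z * (4 * (n : ℝ) * M ^ 2) ≤ z * n / 4 := step
      _ ≤ z ^ 2 * n / 4 := by
          have := mul_le_mul_of_nonneg_right hzz hnpos.le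
          linarith
      _ ≤ a ^ 2 := by linarith
  · -- large deviation: t = 1 / M
    push_neg at hcase
    set t : ℝ := 1 / M with ht_def
    have ht0 : 0 ≤ t := by positivity
    have ht1 : t * M ≤ 1 := by rw [ht_def]; field_simp; exact le_rfl
    refine (aux_chernoff P W hW hind M hM hbdd hmean n t a ht0 ht1).trans
      (ENNReal.ofReal_le_ofReal (exp_le_exp.2 ?_))
    have hexp : -t * a + n * (t ^ 2 * M ^ 2) = -(a / M) + n := by
      rw [ht_def]; field_simp
    rw [hexp]
    have h1 : (n : ℝ) ≤ a / (2 * M) := by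
      rw [le_div_iff₀ (by positivity)]; linarith
    have h2 : a / (2 * M) = a / M - a / (2 * M) := by field_simp; ring
    have h3 : c * z ≤ z / (4 * M) := by
      calc c * z ≤ 1 / (4 * M) * z := mul_le_mul_of_nonneg_right hc2 (by linarith)
        _ = z / (4 * M) := by ring
    have h4 : z / (4 * M) ≤ a / (2 * M) := by
      rw [div_le_div_iff₀ (by positivity) (by positivity)]
      nlinarith
    linarith

lemma aux_exp_poly (c ξ : ℝ) (hc : 0 < c) (hξ : 0 < ξ) (z : ℝ) (hz : 1 ≤ z) :
    exp (-(c * z)) ≤ ((Nat.factorial ⌈ξ⌉₊ : ℝ) / c ^ ⌈ξ⌉₊) / z ^ ξ := by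
  set k := ⌈ξ⌉₊ with hk_def
  have hk : ξ ≤ (k : ℝ) := Nat.le_ceil ξ
  have hzpos : (0 : ℝ) < z := by linarith
  have hcz : 0 < c * z := by positivity
  have h1 : (c * z) ^ k / (Nat.factorial k : ℝ) ≤ exp (c * z) := by
    calc (c * z) ^ k / (Nat.factorial k : ℝ)
        ≤ ∑ i ∈ range (k + 1), (c * z) ^ i / (Nat.factorial i : ℝ) :=
          Finset.single_le_sum (f := fun i => (c * z) ^ i / (Nat.factorial i : ℝ))
            (fun i _ => by positivity) (self_mem_range_succ k)
      _ ≤ exp (c * z) := Real.sum_le_exp_of_nonneg hcz.le _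
  have h2 : exp (-(c * z)) ≤ (Nat.factorial k : ℝ) / (c * z) ^ k := by
    rw [Real.exp_neg]
    have h3 : (0 : ℝ) < (c * z) ^ k / (Nat.factorial k : ℝ) := by positivity
    calc (exp (c * z))⁻¹ ≤ ((c * z) ^ k / (Nat.factorial k : ℝ))⁻¹ := by
          exact inv_anti₀ h3 h1
      _ = (Nat.factorial k : ℝ) / (c * z) ^ k := by rw [inv_div]
  calc exp (-(c * z)) ≤ (Nat.factorial k : ℝ) / (c * z) ^ k := h2
    _ = ((Nat.factorial k : ℝ) / c ^ k) / z ^ k := by rw [mul_pow, ← div_div]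
    _ ≤ ((Nat.factorial k : ℝ) / c ^ k) / z ^ ξ := by
        have hzk : z ^ ξ ≤ z ^ (k : ℕ) := by
          rw [← Real.rpow_natCast z k]
          exact Real.rpow_le_rpow_of_exponent_le hz hk
        gcongr


end AuxLemmas

open Real Finset in
set_option maxHeartbeats 1600000 in
/-- Lemma 4: if `(X_i)` are i.i.d. bounded random variables, independent of a sequence `(Y_i)`
whose running averages converge in mean to `μ_Y` and concentrate polynomially, then the
sequence `Z_i = X_i + ρ Y_i` has the same convergence and (polynomial) concentration
properties around `μ_X + ρ μ_Y`. -/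
theorem sum_iid_plus_concentrated_sequence
    {Ω : Type*} [MeasurableSpace Ω] (P : Measure Ω) [IsProbabilityMeasure P]
    (B : ℝ) (hB : 0 < B)
    (X Y : ℕ → Ω → ℝ)
    (hXmeas : ∀ i, Measurable (X i))
    (hXbdd : ∀ i ω, X i ω ∈ Set.Icc (-B) B)
    (hXiid : iIndepFun X P)
    (hXident : ∀ i, IdentDistrib (X i) (X 0) P P)
    (hYmeas : ∀ i, Measurable (Y i))
    (hYint : ∀ i, Integrable (Y i) P)
    (hXY : IndepFun (fun ω => fun i => X i ω) (fun ω => fun i => Y i ω) P)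
    (μY : ℝ)
    (hYconv : Filter.Tendsto
      (fun n : ℕ => ∫ ω, (∑ i ∈ Finset.range n, Y i ω) / n ∂P) Filter.atTop (nhds μY))
    (β ξ η : ℝ) (hβ : 1 < β) (hξ : 0 < ξ) (hη : 1 / 2 ≤ η) (hη' : η < 1)
    (hYconc : ∀ n : ℕ, 1 ≤ n → ∀ z : ℝ, 1 ≤ z →
      P {ω | (n : ℝ) * ((∑ i ∈ Finset.range n, Y i ω) / n) - n * μY ≥ (n : ℝ) ^ η * z}
        ≤ ENNReal.ofReal (β / z ^ ξ) ∧
      P {ω | (n : ℝ) * ((∑ i ∈ Finset.range n, Y i ω) / n) - n * μY ≤ -((n : ℝ) ^ η * z)}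
        ≤ ENNReal.ofReal (β / z ^ ξ))
    (ρ : ℝ) (hρ : 0 < ρ) :
    Filter.Tendsto
      (fun n : ℕ => ∫ ω, (∑ i ∈ Finset.range n, (X i ω + ρ * Y i ω)) / n ∂P)
      Filter.atTop (nhds ((∫ ω, X 0 ω ∂P) + ρ * μY)) ∧
    ∃ β' : ℝ, 1 < β' ∧ ∀ n : ℕ, 1 ≤ n → ∀ z : ℝ, 1 ≤ z →
      P {ω | (n : ℝ) * ((∑ i ∈ Finset.range n, (X i ω + ρ * Y i ω)) / n)
            - n * ((∫ ω', X 0 ω' ∂P) + ρ * μY) ≥ (n : ℝ) ^ η * z}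
        ≤ ENNReal.ofReal (β' / z ^ ξ) ∧
      P {ω | (n : ℝ) * ((∑ i ∈ Finset.range n, (X i ω + ρ * Y i ω)) / n)
            - n * ((∫ ω', X 0 ω' ∂P) + ρ * μY) ≤ -((n : ℝ) ^ η * z)}
        ≤ ENNReal.ofReal (β' / z ^ ξ) := by
  
  classical
  set μX : ℝ := ∫ ω, X 0 ω ∂P with hμX_def
  -- basic facts about the X's
  have hXabs : ∀ i ω, |X i ω| ≤ B := fun i ω => abs_le.2 ⟨(hXbdd i ω).1, (hXbdd i ω).2⟩
  have hXint : ∀ i, Integrable (X i) P := by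
    intro i
    refine (integrable_const B).mono' (hXmeas i).aestronglyMeasurable
      (ae_of_all _ fun ω => ?_)
    simpa [Real.norm_eq_abs] using hXabs i ω
  have hμXabs : |μX| ≤ B := by
    have h := norm_integral_le_of_norm_le_const (μ := P) (f := X 0) (C := B)
      (ae_of_all _ fun ω => by simpa [Real.norm_eq_abs] using hXabs 0 ω)
    simpa [Real.norm_eq_abs] using h
  have hμXB := abs_le.1 hμXabs
  have hXint_eq : ∀ i, ∫ ω, X i ω ∂P = μX := fun i => (hXident i).integral_eq
  -- Part A
  have keyA : ∀ n : ℕ, 1 ≤ n →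
      ∫ ω, (∑ i ∈ Finset.range n, (X i ω + ρ * Y i ω)) / n ∂P
        = μX + ρ * ∫ ω, (∑ i ∈ Finset.range n, Y i ω) / n ∂P := by
    intro n hn
    have hn0 : (n : ℝ) ≠ 0 := Nat.cast_ne_zero.2 (by omega)
    have hZint : ∀ i ∈ range n, Integrable (fun ω => X i ω + ρ * Y i ω) P :=
      fun i _ => (hXint i).add ((hYint i).const_mul ρ)
    rw [integral_div, integral_div, integral_finset_sum _ hZint,
      integral_finset_sum _ (fun i _ => hYint i)]
    have hterm : ∀ i ∈ range n, ∫ ω, (X i ω + ρ * Y i ω) ∂P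
        = μX + ρ * ∫ ω, Y i ω ∂P := by
      intro i _
      rw [integral_add (hXint i) ((hYint i).const_mul ρ), integral_const_mul, hXint_eq i]
    rw [Finset.sum_congr rfl hterm, Finset.sum_add_distrib, Finset.sum_const, card_range,
      ← Finset.mul_sum, nsmul_eq_mul]
    field_simp
  have partA : Filter.Tendsto
      (fun n : ℕ => ∫ ω, (∑ i ∈ Finset.range n, (X i ω + ρ * Y i ω)) / n ∂P)
      Filter.atTop (nhds (μX + ρ * μY)) := by
    refine Filter.Tendsto.congr' ?_ (tendsto_const_nhds.add (hYconv.const_mul ρ))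
    filter_upwards [Filter.eventually_ge_atTop 1] with n hn
    exact (keyA n hn).symm
  refine ⟨partA, ?_⟩
  -- Part B
  set M : ℝ := 2 * B with hM_def
  have hM : 0 < M := by positivity
  set c : ℝ := min (1 / (16 * M ^ 2)) (1 / (4 * M)) with hc_def
  have hcpos : 0 < c := lt_min (by positivity) (by positivity)
  set CX : ℝ := (Nat.factorial ⌈ξ⌉₊ : ℝ) / c ^ ⌈ξ⌉₊ with hCX_def
  have hCX0 : 0 ≤ CX := by positivity
  set KY : ℝ := β * (max 1 (2 * ρ)) ^ ξ with hKY_def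
  have hmax1 : (1 : ℝ) ≤ (max 1 (2 * ρ)) ^ ξ := by
    calc (1 : ℝ) = (1 : ℝ) ^ ξ := (Real.one_rpow ξ).symm
      _ ≤ (max 1 (2 * ρ)) ^ ξ :=
        Real.rpow_le_rpow (by norm_num) (le_max_left _ _) hξ.le
  have hKY1 : 1 ≤ KY := by nlinarith
  have hKY0 : 0 ≤ KY := by linarith
  refine ⟨CX + KY + 2, by linarith, ?_⟩
  intro n hn z hz
  have hn0 : (n : ℝ) ≠ 0 := Nat.cast_ne_zero.2 (by omega)
  have hzpos : (0 : ℝ) < z := by linarith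
  have hzξ : (0 : ℝ) < z ^ ξ := Real.rpow_pos_of_pos hzpos ξ
  -- the centered X-variables and their negatives
  set W : ℕ → Ω → ℝ := fun i ω => X i ω - μX with hW_def
  set V : ℕ → Ω → ℝ := fun i ω => μX - X i ω with hV_def
  have hWmeas : ∀ i, Measurable (W i) := fun i => (hXmeas i).sub measurable_const
  have hVmeas : ∀ i, Measurable (V i) := fun i => measurable_const.sub (hXmeas i)
  have hWind : iIndepFun W P :=
    hXiid.comp (fun _ x => x - μX) (fun _ => measurable_id.sub measurable_const)
  have hVind : iIndepFun V P :=
    hXiid.comp (fun _ x => μX - x) (fun _ => measurable_const.sub measurable_id)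
  have hWbdd : ∀ i ω, |W i ω| ≤ M := by
    intro i ω
    have h := abs_le.1 (hXabs i ω)
    exact abs_le.2 ⟨by simp only [hW_def, hM_def]; linarith, by simp only [hW_def, hM_def]; linarith⟩
  have hVbdd : ∀ i ω, |V i ω| ≤ M := by
    intro i ω
    have h := abs_le.1 (hXabs i ω)
    exact abs_le.2 ⟨by simp only [hV_def, hM_def]; linarith, by simp only [hV_def, hM_def]; linarith⟩
  have hWmean : ∀ i, ∫ ω, W i ω ∂P = 0 := by
    intro i
    simp only [hW_def]
    rw [integral_sub (hXint i) (integrable_const μX), hXint_eq i, integral_const]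
    simp
  have hVmean : ∀ i, ∫ ω, V i ω ∂P = 0 := by
    intro i
    simp only [hV_def]
    rw [integral_sub (integrable_const μX) (hXint i), hXint_eq i, integral_const]
    simp
  -- tail bounds for the X-part
  have hcz_le : Real.exp (-(c * z)) ≤ CX / z ^ ξ := aux_exp_poly c ξ hcpos hξ z hz
  have hA1 : P {ω | (n : ℝ) ^ η * z / 2 ≤ ∑ i ∈ range n, W i ω}
      ≤ ENNReal.ofReal (CX / z ^ ξ) :=
    (aux_tail P W hWmeas hWind M hM hWbdd hWmean η hη n hn z hz).trans
      (ENNReal.ofReal_le_ofReal hcz_le)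
  have hB1 : P {ω | (n : ℝ) ^ η * z / 2 ≤ ∑ i ∈ range n, V i ω}
      ≤ ENNReal.ofReal (CX / z ^ ξ) :=
    (aux_tail P V hVmeas hVind M hM hVbdd hVmean η hη n hn z hz).trans
      (ENNReal.ofReal_le_ofReal hcz_le)
  -- Y-part bounds
  have hsumY : ∀ ω, (n : ℝ) * ((∑ i ∈ range n, Y i ω) / n) = ∑ i ∈ range n, Y i ω := by
    intro ω; field_simp
  have hY_upper : P {ω | (n : ℝ) ^ η * z / 2 ≤ ρ * ((∑ i ∈ range n, Y i ω) - n * μY)}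
      ≤ ENNReal.ofReal (KY / z ^ ξ) := by
    by_cases hcase : 1 ≤ z / (2 * ρ)
    · have hset : {ω | (n : ℝ) ^ η * z / 2 ≤ ρ * ((∑ i ∈ range n, Y i ω) - n * μY)}
          = {ω | (n : ℝ) * ((∑ i ∈ range n, Y i ω) / n) - n * μY ≥ (n : ℝ) ^ η * (z / (2 * ρ))} := by
        ext ω
        simp only [Set.mem_setOf_eq, ge_iff_le]
        rw [hsumY ω,
          show (n : ℝ) ^ η * (z / (2 * ρ)) = ((n : ℝ) ^ η * z / 2) / ρ by ring,
          div_le_iff₀ hρ]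
        constructor <;> intro h <;> nlinarith
      rw [hset]
      refine ((hYconc n hn (z / (2 * ρ)) hcase).1).trans (ENNReal.ofReal_le_ofReal ?_)
      rw [Real.div_rpow hzpos.le (by positivity), div_div_eq_mul_div]
      have h2ρ : (2 * ρ) ^ ξ ≤ (max 1 (2 * ρ)) ^ ξ :=
        Real.rpow_le_rpow (by positivity) (le_max_right _ _) hξ.le
      rw [hKY_def]
      gcongr
    · push_neg at hcase
      have hz2ρ : z ≤ 2 * ρ := by
        rw [div_lt_one (by positivity)] at hcase; linarith
      calc P _ ≤ 1 := prob_le_one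
        _ = ENNReal.ofReal 1 := ENNReal.ofReal_one.symm
        _ ≤ ENNReal.ofReal (KY / z ^ ξ) := by
            refine ENNReal.ofReal_le_ofReal ?_
            rw [le_div_iff₀ hzξ, one_mul]
            have h1 : z ^ ξ ≤ (2 * ρ) ^ ξ := Real.rpow_le_rpow hzpos.le hz2ρ hξ.le
            have h2 : (2 * ρ) ^ ξ ≤ (max 1 (2 * ρ)) ^ ξ :=
              Real.rpow_le_rpow (by positivity) (le_max_right _ _) hξ.le
            have h3 : (max 1 (2 * ρ)) ^ ξ ≤ KY := by
              rw [hKY_def]; nlinarith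
            linarith
  have hY_lower : P {ω | ρ * ((∑ i ∈ range n, Y i ω) - n * μY) ≤ -((n : ℝ) ^ η * z / 2)}
      ≤ ENNReal.ofReal (KY / z ^ ξ) := by
    by_cases hcase : 1 ≤ z / (2 * ρ)
    · have hset : {ω | ρ * ((∑ i ∈ range n, Y i ω) - n * μY) ≤ -((n : ℝ) ^ η * z / 2)}
          = {ω | (n : ℝ) * ((∑ i ∈ range n, Y i ω) / n) - n * μY
              ≤ -((n : ℝ) ^ η * (z / (2 * ρ)))} := by
        ext ω
        simp only [Set.mem_setOf_eq]
        rw [hsumY ω,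
          show -((n : ℝ) ^ η * (z / (2 * ρ))) = (-((n : ℝ) ^ η * z / 2)) / ρ by ring,
          le_div_iff₀ hρ]
        constructor <;> intro h <;> nlinarith
      rw [hset]
      refine ((hYconc n hn (z / (2 * ρ)) hcase).2).trans (ENNReal.ofReal_le_ofReal ?_)
      rw [Real.div_rpow hzpos.le (by positivity), div_div_eq_mul_div]
      have h2ρ : (2 * ρ) ^ ξ ≤ (max 1 (2 * ρ)) ^ ξ :=
        Real.rpow_le_rpow (by positivity) (le_max_right _ _) hξ.le
      rw [hKY_def]
      gcongr
    · push_neg at hcase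
      have hz2ρ : z ≤ 2 * ρ := by
        rw [div_lt_one (by positivity)] at hcase; linarith
      calc P _ ≤ 1 := prob_le_one
        _ = ENNReal.ofReal 1 := ENNReal.ofReal_one.symm
        _ ≤ ENNReal.ofReal (KY / z ^ ξ) := by
            refine ENNReal.ofReal_le_ofReal ?_
            rw [le_div_iff₀ hzξ, one_mul]
            have h1 : z ^ ξ ≤ (2 * ρ) ^ ξ := Real.rpow_le_rpow hzpos.le hz2ρ hξ.le
            have h2 : (2 * ρ) ^ ξ ≤ (max 1 (2 * ρ)) ^ ξ :=
              Real.rpow_le_rpow (by positivity) (le_max_right _ _) hξ.le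
            have h3 : (max 1 (2 * ρ)) ^ ξ ≤ KY := by
              rw [hKY_def]; nlinarith
            linarith
  -- algebraic decomposition
  have hsumZ : ∀ ω, (n : ℝ) * ((∑ i ∈ range n, (X i ω + ρ * Y i ω)) / n)
      = ∑ i ∈ range n, (X i ω + ρ * Y i ω) := by
    intro ω; field_simp
  have hdecomp : ∀ ω, ∑ i ∈ range n, (X i ω + ρ * Y i ω) - n * (μX + ρ * μY)
      = (∑ i ∈ range n, W i ω) + ρ * ((∑ i ∈ range n, Y i ω) - n * μY) := by
    intro ω
    simp only [hW_def]
    rw [Finset.sum_add_distrib, Finset.sum_sub_distrib, Finset.sum_const, card_range,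
      nsmul_eq_mul, ← Finset.mul_sum]
    ring
  have hVW : ∀ ω, ∑ i ∈ range n, V i ω = -(∑ i ∈ range n, W i ω) := by
    intro ω
    simp only [hV_def, hW_def]
    rw [← Finset.sum_neg_distrib]
    exact Finset.sum_congr rfl fun i _ => by ring
  -- final combination
  have hfinal : ENNReal.ofReal (CX / z ^ ξ) + ENNReal.ofReal (KY / z ^ ξ)
      ≤ ENNReal.ofReal ((CX + KY + 2) / z ^ ξ) := by
    rw [← ENNReal.ofReal_add (by positivity) (by positivity)]
    refine ENNReal.ofReal_le_ofReal ?_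
    rw [← add_div]
    exact (div_le_div_iff_of_pos_right hzξ).2 (by linarith)
  constructor
  · -- upper tail
    have hsub : {ω | (n : ℝ) * ((∑ i ∈ Finset.range n, (X i ω + ρ * Y i ω)) / n)
            - n * (μX + ρ * μY) ≥ (n : ℝ) ^ η * z}
        ⊆ {ω | (n : ℝ) ^ η * z / 2 ≤ ∑ i ∈ range n, W i ω}
          ∪ {ω | (n : ℝ) ^ η * z / 2 ≤ ρ * ((∑ i ∈ range n, Y i ω) - n * μY)} := by
      intro ω hω
      simp only [Set.mem_setOf_eq, ge_iff_le] at hω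
      rw [hsumZ ω] at hω
      have hd := hdecomp ω
      by_contra hcon
      simp only [Set.mem_union, Set.mem_setOf_eq, not_or, not_le] at hcon
      linarith [hcon.1, hcon.2]
    calc P _ ≤ P ({ω | (n : ℝ) ^ η * z / 2 ≤ ∑ i ∈ range n, W i ω}
          ∪ {ω | (n : ℝ) ^ η * z / 2 ≤ ρ * ((∑ i ∈ range n, Y i ω) - n * μY)}) :=
          measure_mono hsub
      _ ≤ P {ω | (n : ℝ) ^ η * z / 2 ≤ ∑ i ∈ range n, W i ω}
          + P {ω | (n : ℝ) ^ η * z / 2 ≤ ρ * ((∑ i ∈ range n, Y i ω) - n * μY)} :=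
          measure_union_le _ _
      _ ≤ ENNReal.ofReal (CX / z ^ ξ) + ENNReal.ofReal (KY / z ^ ξ) := add_le_add hA1 hY_upper
      _ ≤ ENNReal.ofReal ((CX + KY + 2) / z ^ ξ) := hfinal
  · -- lower tail
    have hsub : {ω | (n : ℝ) * ((∑ i ∈ Finset.range n, (X i ω + ρ * Y i ω)) / n)
            - n * (μX + ρ * μY) ≤ -((n : ℝ) ^ η * z)}
        ⊆ {ω | (n : ℝ) ^ η * z / 2 ≤ ∑ i ∈ range n, V i ω}
          ∪ {ω | ρ * ((∑ i ∈ range n, Y i ω) - n * μY) ≤ -((n : ℝ) ^ η * z / 2)} := by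
      intro ω hω
      simp only [Set.mem_setOf_eq] at hω
      rw [hsumZ ω] at hω
      have hd := hdecomp ω
      have hv := hVW ω
      by_contra hcon
      simp only [Set.mem_union, Set.mem_setOf_eq, not_or, not_le, not_lt] at hcon
      linarith [hcon.1, hcon.2]
    calc P _ ≤ P ({ω | (n : ℝ) ^ η * z / 2 ≤ ∑ i ∈ range n, V i ω}
          ∪ {ω | ρ * ((∑ i ∈ range n, Y i ω) - n * μY) ≤ -((n : ℝ) ^ η * z / 2)}) :=
          measure_mono hsub
      _ ≤ P {ω | (n : ℝ) ^ η * z / 2 ≤ ∑ i ∈ range n, V i ω}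
          + P {ω | ρ * ((∑ i ∈ range n, Y i ω) - n * μY) ≤ -((n : ℝ) ^ η * z / 2)} :=
          measure_union_le _ _
      _ ≤ ENNReal.ofReal (CX / z ^ ξ) + ENNReal.ofReal (KY / z ^ ξ) := add_le_add hB1 hY_lower
      _ ≤ ENNReal.ofReal ((CX + KY + 2) / z ^ ξ) := hfinal
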